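/- arXiv:2603.26492 — 4 statements merged into one kernel-verified Lean document; each statement's English description precedes it below -/
import Mathlib

section
/- The localization of the ring R = 𝔽₂[ρ, r₀, r₁, r₂, …]/(rᵢ² − ρ·rᵢ₊₁ : i ∈ ℕ) away from the element ρ̄ is isomorphic, as a commutative ring, to the polynomial ring in one variable over the Laurent polynomial ring 𝔽₂[t, t⁻¹]. More precisely, the 𝔽₂-algebra homomorphism (𝔽₂[t, t⁻¹])[X] → R[ρ̄⁻¹] sending t to the image of ρ̄ (which is invertible in the localization) and X to the image of r̄₀ is bijective. -/
open MvPolynomial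

set_option maxHeartbeats 1000000
set_option synthInstance.maxHeartbeats 200000

noncomputable section

/-- The polynomial ring `𝔽₂[ρ, r₀, r₁, …]`: variable `none` is `ρ`, `some i` is `rᵢ`. -/
abbrev P : Type := MvPolynomial (Option ℕ) (ZMod 2)

/-- The ideal generated by the relations `rᵢ² − ρ·rᵢ₊₁`, `i ∈ ℕ`. -/
def relIdeal : Ideal P :=
  Ideal.span (Set.range fun i : ℕ => (X (some i) : P) ^ 2 - X none * X (some (i + 1)))

/-- `R = 𝔽₂[ρ, r₀, r₁, …]/(rᵢ² − ρ·rᵢ₊₁ : i ∈ ℕ)`. -/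
abbrev R : Type := P ⧸ relIdeal

/-- The image `ρ̄` of `ρ` in `R`. -/
def ρbar : R := Ideal.Quotient.mk relIdeal (X none)

/-- The image `r̄ᵢ` of `rᵢ` in `R`. -/
def rbar (i : ℕ) : R := Ideal.Quotient.mk relIdeal (X (some i))

namespace Aux

open LaurentPolynomial

abbrev L : Type := LaurentPolynomial (ZMod 2)
abbrev PL : Type := Polynomial L
abbrev Rloc : Type := Localization.Away ρbar

/-- Target of the variables under `ψ`. -/
def f0 : Option ℕ → PL
  | none => Polynomial.C (T 1)
  | some i => Polynomial.X ^ (2 ^ i) * Polynomial.C (T (1 - 2 ^ i))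

def ψ₀ : P →ₐ[ZMod 2] PL := MvPolynomial.aeval f0

lemma ψ₀_rel (i : ℕ) : ψ₀ ((X (some i) : P) ^ 2 - X none * X (some (i + 1))) = 0 := by
  have h1 : ψ₀ (X (some i) : P) = Polynomial.X ^ (2 ^ i) * Polynomial.C (T (1 - 2 ^ i)) := by
    simp [ψ₀, f0]
  have h2 : ψ₀ (X (some (i + 1)) : P) =
      Polynomial.X ^ (2 ^ (i + 1)) * Polynomial.C (T (1 - 2 ^ (i + 1))) := by
    simp [ψ₀, f0]
  have h3 : ψ₀ (X none : P) = Polynomial.C (T 1) := by simp [ψ₀, f0]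
  rw [map_sub, map_pow, map_mul, h1, h2, h3]
  have e1 : ((Polynomial.X : PL) ^ 2 ^ i * Polynomial.C (T (1 - 2 ^ i))) ^ 2 =
      Polynomial.X ^ (2 ^ (i + 1)) * Polynomial.C ((T (1 - 2 ^ i)) ^ 2) := by
    rw [mul_pow, ← pow_mul, ← map_pow]
    ring_nf
  rw [e1, T_pow]
  have e2 : Polynomial.C (T 1) *
        ((Polynomial.X : PL) ^ 2 ^ (i + 1) * Polynomial.C (T (1 - 2 ^ (i + 1)))) =
      Polynomial.X ^ (2 ^ (i + 1)) * Polynomial.C (T 1 * T (1 - 2 ^ (i + 1))) := by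
    rw [map_mul]; ring
  rw [e2, ← T_add]
  have : ((2 : ℕ) : ℤ) * (1 - 2 ^ i) = 1 + (1 - 2 ^ (i + 1)) := by push_cast; ring
  rw [this, sub_self]

def ψR : R →ₐ[ZMod 2] PL :=
  Ideal.Quotient.liftₐ relIdeal ψ₀ (by
    intro a ha
    refine Submodule.span_induction ?_ ?_ ?_ ?_ ha
    · rintro x ⟨i, rfl⟩; exact ψ₀_rel i
    · simp
    · intro x y _ _ hx hy; rw [map_add, hx, hy, add_zero]
    · intro c x _ hx
      rw [smul_eq_mul, map_mul, hx, mul_zero])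

lemma ψR_ρbar : ψR ρbar = Polynomial.C (T 1) := by
  show ψ₀ (X none) = _
  simp [ψ₀, f0]

lemma ψR_rbar (i : ℕ) :
    ψR (rbar i) = Polynomial.X ^ (2 ^ i) * Polynomial.C (T (1 - 2 ^ i)) := by
  show ψ₀ (X (some i)) = _
  simp [ψ₀, f0]

lemma isUnit_ψR_ρbar : IsUnit (ψR.toRingHom ρbar) := by
  rw [AlgHom.toRingHom_eq_coe, RingHom.coe_coe, ψR_ρbar]
  exact (isUnit_T 1).map (Polynomial.C : L →+* PL)

def ψ' : Rloc →+* PL := Localization.awayLift ψR.toRingHom ρbar isUnit_ψR_ρbar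

lemma ψ'_algebraMap (x : R) : ψ' (algebraMap R Rloc x) = ψR x :=
  IsLocalization.Away.lift_eq ρbar isUnit_ψR_ρbar x

/-- `Polynomial (ZMod 2) → Rloc`, sending `X` to the image of `ρbar`. -/
def p0 : Polynomial (ZMod 2) →+* Rloc :=
  (Polynomial.aeval (algebraMap R Rloc ρbar)).toRingHom

lemma p0_X : p0 Polynomial.X = algebraMap R Rloc ρbar := by simp [p0]

instance : IsLocalization (Submonoid.powers (Polynomial.X : Polynomial (ZMod 2))) L :=
  LaurentPolynomial.isLocalization

lemma p0_units : ∀ y : Submonoid.powers (Polynomial.X : Polynomial (ZMod 2)),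
    IsUnit (p0 y) := by
  rintro ⟨-, n, rfl⟩
  rw [map_pow]
  have h : IsUnit (p0 Polynomial.X) := by
    rw [p0_X]
    exact IsLocalization.Away.algebraMap_isUnit (S := Rloc) ρbar
  exact h.pow n

def g1 : L →+* Rloc :=
  IsLocalization.lift (M := Submonoid.powers (Polynomial.X : Polynomial (ZMod 2))) p0_units

lemma g1_algebraMap (p : Polynomial (ZMod 2)) :
    g1 (algebraMap (Polynomial (ZMod 2)) L p) = p0 p :=
  IsLocalization.lift_eq p0_units p

lemma g1_T_one : g1 (T 1) = algebraMap R Rloc ρbar := by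
  have : (T 1 : L) = algebraMap (Polynomial (ZMod 2)) L Polynomial.X := by
    rw [LaurentPolynomial.algebraMap_eq_toLaurent, Polynomial.toLaurent_X]
  rw [this, g1_algebraMap, p0_X]

def φ0 : PL →+* Rloc := Polynomial.eval₂RingHom g1 (algebraMap R Rloc (rbar 0))

def φ : PL →ₐ[ZMod 2] Rloc :=
  { φ0 with
    commutes' := fun c =>
      RingHom.congr_fun
        (RingHom.ext_zmod (φ0.comp (algebraMap (ZMod 2) PL)) (algebraMap (ZMod 2) Rloc)) c }

lemma φ_apply (x : PL) : φ x = φ0 x := rfl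

lemma φ_C_T (n : ℤ) : φ (Polynomial.C (T n)) = g1 (T n) := by
  rw [φ_apply, φ0, Polynomial.coe_eval₂RingHom, Polynomial.eval₂_C]

lemma φ_X : φ Polynomial.X = algebraMap R Rloc (rbar 0) := by
  rw [φ_apply, φ0, Polynomial.coe_eval₂RingHom, Polynomial.eval₂_X]

lemma rel_R (i : ℕ) : rbar i ^ 2 = ρbar * rbar (i + 1) := by
  have h : Ideal.Quotient.mk relIdeal ((X (some i) : P) ^ 2 - X none * X (some (i + 1))) = 0 :=
    Ideal.Quotient.eq_zero_iff_mem.2 (Ideal.subset_span ⟨i, rfl⟩)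
  rw [map_sub, map_pow, map_mul, sub_eq_zero] at h
  exact h

lemma key1 (i : ℕ) : (algebraMap R Rloc (rbar 0)) ^ (2 ^ i) =
    algebraMap R Rloc (rbar i) * (algebraMap R Rloc ρbar) ^ (2 ^ i - 1) := by
  induction i with
  | zero => simp
  | succ i ih =>
    have h1 : (1 : ℕ) ≤ 2 ^ i := Nat.one_le_two_pow
    have e : 2 ^ (i + 1) = 2 ^ i * 2 := by ring
    rw [e, pow_mul, ih, mul_pow, ← pow_mul, ← map_pow, rel_R i, map_mul]
    have e2 : (2 ^ i - 1) * 2 + 1 = 2 ^ i * 2 - 1 := by omega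
    rw [← e2, pow_add, pow_one]
    ring

lemma key2 (i : ℕ) :
    g1 (T (1 - 2 ^ i)) * (algebraMap R Rloc ρbar) ^ (2 ^ i - 1) = 1 := by
  have h1 : (1 : ℕ) ≤ 2 ^ i := Nat.one_le_two_pow
  have hpow : (algebraMap R Rloc ρbar) ^ (2 ^ i - 1) = g1 (T ((2 ^ i - 1 : ℕ) : ℤ)) := by
    rw [← g1_T_one, ← map_pow, T_pow, mul_one]
  rw [hpow, ← map_mul, ← T_add]
  have : 1 - (2 : ℤ) ^ i + ((2 ^ i - 1 : ℕ) : ℤ) = 0 := by push_cast [h1]; ring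
  rw [this, T_zero, map_one]

lemma φψ_rbar (i : ℕ) : φ (ψR (rbar i)) = algebraMap R Rloc (rbar i) := by
  rw [ψR_rbar, map_mul, map_pow, φ_X, φ_C_T, key1 i, mul_assoc,
    mul_comm ((algebraMap R Rloc) ρbar ^ (2 ^ i - 1)), key2 i, mul_one]

lemma comp1 : ψ'.comp φ0 = RingHom.id PL := by
  refine Polynomial.ringHom_ext' ?_ ?_
  · -- equality of ring homs L →+* PL
    refine IsLocalization.ringHom_ext (Submonoid.powers (Polynomial.X : Polynomial (ZMod 2))) ?_
    refine Polynomial.ringHom_ext' (RingHom.ext_zmod _ _) ?_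
    have hT : (algebraMap (Polynomial (ZMod 2)) L) Polynomial.X = T 1 := by
      rw [LaurentPolynomial.algebraMap_eq_toLaurent, Polynomial.toLaurent_X]
    simp only [RingHom.coe_comp, Function.comp_apply, hT]
    show ψ' (φ0 (Polynomial.C (T 1))) = Polynomial.C (T 1)
    rw [← φ_apply, φ_C_T, g1_T_one, ψ'_algebraMap, ψR_ρbar]
  · show ψ' (φ0 Polynomial.X) = Polynomial.X
    rw [← φ_apply, φ_X, ψ'_algebraMap, ψR_rbar]
    simp
  
lemma comp2 : φ0.comp ψ' = RingHom.id Rloc := by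
  refine IsLocalization.ringHom_ext (S := Rloc) (P := Rloc) (Submonoid.powers ρbar) ?_
  rw [RingHom.comp_assoc]
  refine Ideal.Quotient.ringHom_ext ?_
  refine MvPolynomial.ringHom_ext (fun a => RingHom.congr_fun (RingHom.ext_zmod
    ((((φ0.comp ψ').comp (algebraMap R Rloc)).comp (Ideal.Quotient.mk relIdeal)).comp
      (MvPolynomial.C : ZMod 2 →+* P))
    (((RingHom.id Rloc).comp (algebraMap R Rloc)).comp
      ((Ideal.Quotient.mk relIdeal : P →+* R).comp (MvPolynomial.C : ZMod 2 →+* P)))) a) ?_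
  rintro (_ | i) <;>
    simp only [RingHom.coe_comp, Function.comp_apply, RingHom.id_apply]
  · show φ0 (ψ' (algebraMap R Rloc ρbar)) = algebraMap R Rloc ρbar
    rw [ψ'_algebraMap, ψR_ρbar, ← φ_apply, φ_C_T, g1_T_one]
  · show φ0 (ψ' (algebraMap R Rloc (rbar i))) = algebraMap R Rloc (rbar i)
    rw [ψ'_algebraMap, ← φ_apply, φψ_rbar]

end Aux

/-- The `𝔽₂`-algebra homomorphism `(𝔽₂[t, t⁻¹])[X] → R[ρ̄⁻¹]` sending `t` to the image of `ρ̄`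
and `X` to the image of `r̄₀` is bijective; in particular the localization of `R` away from `ρ̄`
is isomorphic to the polynomial ring in one variable over the Laurent polynomial ring
`𝔽₂[t, t⁻¹]`. -/
theorem stmt1 :
    ∃ φ : Polynomial (LaurentPolynomial (ZMod 2)) →ₐ[ZMod 2] Localization.Away ρbar,
      φ (Polynomial.C (LaurentPolynomial.T 1)) =
          algebraMap R (Localization.Away ρbar) ρbar ∧
      φ Polynomial.X = algebraMap R (Localization.Away ρbar) (rbar 0) ∧
      Function.Bijective φ := by
  refine ⟨Aux.φ, Aux.φ_C_T 1 |>.trans Aux.g1_T_one, Aux.φ_X, ?_, ?_⟩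
  · intro x y hxy
    have := RingHom.congr_fun Aux.comp1 x
    have h2 := RingHom.congr_fun Aux.comp1 y
    simp only [RingHom.coe_comp, Function.comp_apply, RingHom.id_apply] at this h2
    rw [← this, ← h2]
    exact congrArg _ hxy
  · intro y
    refine ⟨Aux.ψ' y, ?_⟩
    have := RingHom.congr_fun Aux.comp2 y
    simpa [Aux.φ_apply] using this
end
end

section
/- The localization of the ring R = 𝔽₂[ρ, r₀, r₁, r₂, …]/(rᵢ² − ρ·rᵢ₊₁ : i ∈ ℕ) at the multiplicative submonoid generated by the two elements ρ̄ and r̄₀ is isomorphic, as a commutative ring, to the Laurent polynomial ring in two variables over 𝔽₂, i.e. to 𝔽₂[ρ, ρ⁻¹, r₀, r₀⁻¹] = (𝔽₂[t, t⁻¹])[u, u⁻¹]. -/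
open MvPolynomial

noncomputable section

namespace Stmt2Aux

open LaurentPolynomial

abbrev L0 : Type := LaurentPolynomial (ZMod 2)
abbrev L : Type := LaurentPolynomial L0
abbrev S : Submonoid R := Submonoid.closure {ρbar, rbar 0}
abbrev Loc : Type := Localization S

/-- target values of the variables -/
def gv : Option ℕ → L
  | none => LaurentPolynomial.C (T 1)
  | some i => LaurentPolynomial.C (T (1 - 2 ^ i)) * T (2 ^ i)

def f0 : P →+* L := MvPolynomial.eval₂Hom (algebraMap (ZMod 2) L) gv

lemma f0_none : f0 (X none) = LaurentPolynomial.C (T 1) := by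
  simp [f0, gv]

lemma f0_some (i : ℕ) :
    f0 (X (some i)) = LaurentPolynomial.C (T (1 - 2 ^ i)) * T (2 ^ i) := by
  simp [f0, gv]

lemma f0_rel (i : ℕ) :
    f0 ((X (some i) : P) ^ 2 - X none * X (some (i + 1))) = 0 := by
  rw [map_sub, sub_eq_zero, map_pow, map_mul, f0_none, f0_some, f0_some, mul_pow,
    ← map_pow, T_pow, T_pow, ← mul_assoc, ← map_mul, ← T_add]
  have e1 : (2 : ℤ) * (1 - 2 ^ i) = 1 + (1 - 2 ^ (i + 1)) := by ring
  have e2 : (2 : ℤ) * 2 ^ i = 2 ^ (i + 1) := by ring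
  norm_num
  rw [e1, e2]

lemma rel_le_ker : relIdeal ≤ RingHom.ker f0 := by
  rw [relIdeal, Ideal.span_le]
  rintro _ ⟨i, rfl⟩
  exact f0_rel i

def fbar : R →+* L := Ideal.Quotient.lift relIdeal f0 fun _ ha => rel_le_ker ha

lemma fbar_ρ : fbar ρbar = LaurentPolynomial.C (T 1) := by
  exact f0_none

lemma fbar_r (i : ℕ) :
    fbar (rbar i) = LaurentPolynomial.C (T (1 - 2 ^ i)) * T (2 ^ i) := by
  exact f0_some i

lemma rbar_sq (i : ℕ) : rbar i ^ 2 = ρbar * rbar (i + 1) := by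
  have hmem : ((X (some i) : P) ^ 2 - X none * X (some (i + 1))) ∈ relIdeal :=
    Ideal.subset_span ⟨i, rfl⟩
  have h := (Ideal.Quotient.eq_zero_iff_mem).2 hmem
  rw [map_sub, map_pow, map_mul, sub_eq_zero] at h
  simpa [rbar, ρbar] using h

lemma fbar_units (y : S) : IsUnit (fbar y) := by
  have hle : S ≤ Submonoid.comap (fbar : R →+* L).toMonoidHom (IsUnit.submonoid L) := by
    rw [Submonoid.closure_le]
    rintro x (rfl | rfl)
    · show IsUnit (fbar ρbar)
      rw [fbar_ρ]
      exact (isUnit_T 1).map LaurentPolynomial.C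
    · show IsUnit (fbar (rbar 0))
      rw [fbar_r]
      exact ((isUnit_T _).map LaurentPolynomial.C).mul (isUnit_T _)
  exact hle y.2

def F : Loc →+* L := IsLocalization.lift (M := S) (S := Loc) fbar_units

lemma F_am (x : R) : F (algebraMap R Loc x) = fbar x :=
  IsLocalization.lift_eq (S := Loc) fbar_units x

/- Backward direction -/

lemma ρbar_mem : ρbar ∈ S := Submonoid.subset_closure (by simp)
lemma rbar0_mem : rbar 0 ∈ S := Submonoid.subset_closure (by simp)

def ρu : Locˣ := (IsLocalization.map_units Loc (⟨ρbar, ρbar_mem⟩ : S)).unit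
def ru : Locˣ := (IsLocalization.map_units Loc (⟨rbar 0, rbar0_mem⟩ : S)).unit

lemma ρu_coe : (ρu : Loc) = algebraMap R Loc ρbar := rfl
lemma ru_coe : (ru : Loc) = algebraMap R Loc (rbar 0) := rfl

def c0 : ZMod 2 →+* Loc :=
  (algebraMap R Loc).comp ((Ideal.Quotient.mk relIdeal).comp MvPolynomial.C)

def h1 : Polynomial (ZMod 2) →+* Loc := Polynomial.eval₂RingHom c0 (ρu : Loc)

lemma h1_units (y : Submonoid.powers (Polynomial.X : Polynomial (ZMod 2))) :
    IsUnit (h1 y) := by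
  obtain ⟨n, hn⟩ := y.2
  have : h1 y = (ρu : Loc) ^ n := by rw [← hn]; simp [h1]
  rw [this, ← Units.val_pow_eq_pow_val]
  exact (ρu ^ n).isUnit

def g1 : L0 →+* Loc :=
  haveI := LaurentPolynomial.isLocalization (R := ZMod 2)
  IsLocalization.lift h1_units

lemma g1_toLaurent (p : Polynomial (ZMod 2)) : g1 (Polynomial.toLaurent p) = h1 p := by
  haveI := LaurentPolynomial.isLocalization (R := ZMod 2)
  exact IsLocalization.lift_eq h1_units p

lemma g1_T1 : g1 (T 1) = (ρu : Loc) := by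
  rw [← Polynomial.toLaurent_X, g1_toLaurent]; simp [h1]

lemma g1_Tneg1 : g1 (T (-1)) * (ρu : Loc) = 1 := by
  rw [← g1_T1, ← map_mul, ← T_add]
  norm_num

def h2 : Polynomial L0 →+* Loc := Polynomial.eval₂RingHom g1 (ru : Loc)

lemma h2_units (y : Submonoid.powers (Polynomial.X : Polynomial L0)) :
    IsUnit (h2 y) := by
  obtain ⟨n, hn⟩ := y.2
  have : h2 y = (ru : Loc) ^ n := by rw [← hn]; simp [h2]
  rw [this, ← Units.val_pow_eq_pow_val]
  exact (ru ^ n).isUnit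

def G : L →+* Loc :=
  haveI := LaurentPolynomial.isLocalization (R := L0)
  IsLocalization.lift h2_units

lemma G_toLaurent (p : Polynomial L0) : G (Polynomial.toLaurent p) = h2 p := by
  haveI := LaurentPolynomial.isLocalization (R := L0)
  exact IsLocalization.lift_eq h2_units p

lemma G_C (x : L0) : G (LaurentPolynomial.C x) = g1 x := by
  rw [← Polynomial.toLaurent_C, G_toLaurent]; simp [h2]

lemma G_T1 : G (T 1) = (ru : Loc) := by
  rw [← Polynomial.toLaurent_X, G_toLaurent]; simp [h2]

/-- Key inductive computation. -/
lemma key (i : ℕ) :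
    algebraMap R Loc (rbar i) * (ρu : Loc) ^ (2 ^ i - 1) = (ru : Loc) ^ (2 ^ i) := by
  induction i with
  | zero => simp [ru_coe]
  | succ i ih =>
    have hk : 1 ≤ 2 ^ i := Nat.one_le_two_pow
    have e1 : 2 ^ (i + 1) - 1 = 1 + ((2 ^ i - 1) + (2 ^ i - 1)) := by
      rw [pow_succ]; omega
    have e2 : 2 ^ (i + 1) = 2 ^ i + 2 ^ i := by rw [pow_succ]; omega
    calc algebraMap R Loc (rbar (i + 1)) * (ρu : Loc) ^ (2 ^ (i + 1) - 1)
        = ((ρu : Loc) * algebraMap R Loc (rbar (i + 1))) *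
            ((ρu : Loc) ^ (2 ^ i - 1) * (ρu : Loc) ^ (2 ^ i - 1)) := by
          rw [e1, pow_add, pow_add, pow_one]; ring
      _ = (algebraMap R Loc (rbar i) * (ρu : Loc) ^ (2 ^ i - 1)) *
            (algebraMap R Loc (rbar i) * (ρu : Loc) ^ (2 ^ i - 1)) := by
          rw [ρu_coe, ← map_mul, ← rbar_sq, sq, map_mul]; ring
      _ = (ru : Loc) ^ (2 ^ i) * (ru : Loc) ^ (2 ^ i) := by rw [ih]
      _ = (ru : Loc) ^ (2 ^ (i + 1)) := by rw [e2, pow_add]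

lemma G_T_pow (i : ℕ) : G (T ((2 : ℤ) ^ i)) = (ru : Loc) ^ (2 ^ i : ℕ) := by
  have : T ((2 : ℤ) ^ i) = (T 1 : L) ^ (2 ^ i : ℕ) := by
    rw [T_pow]; push_cast; ring_nf
  rw [this, map_pow, G_T1]

lemma g1_T_neg (i : ℕ) :
    g1 (T (1 - 2 ^ i)) * (ρu : Loc) ^ (2 ^ i - 1 : ℕ) = 1 := by
  have hk : 1 ≤ 2 ^ i := Nat.one_le_two_pow
  have : (T (1 - 2 ^ i) : L0) = (T (-1)) ^ (2 ^ i - 1 : ℕ) := by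
    rw [T_pow]
    congr 1
    have : ((2 ^ i - 1 : ℕ) : ℤ) = 2 ^ i - 1 := by push_cast [hk]; ring
    rw [this]; ring
  rw [this, map_pow]
  exact (mul_pow (g1 (T (-1))) (ρu : Loc) (2 ^ i - 1)).symm.trans (by rw [g1_Tneg1, one_pow])

lemma GF_r (i : ℕ) : G (fbar (rbar i)) = algebraMap R Loc (rbar i) := by
  rw [fbar_r, map_mul, G_C, G_T_pow]
  calc g1 (T (1 - 2 ^ i)) * (ru : Loc) ^ (2 ^ i : ℕ)
      = g1 (T (1 - 2 ^ i)) * (algebraMap R Loc (rbar i) * (ρu : Loc) ^ (2 ^ i - 1)) := by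
        rw [key]
    _ = algebraMap R Loc (rbar i) *
          (g1 (T (1 - 2 ^ i)) * (ρu : Loc) ^ (2 ^ i - 1 : ℕ)) := by ring
    _ = algebraMap R Loc (rbar i) := by rw [g1_T_neg, mul_one]

lemma G_comp_F : G.comp F = RingHom.id Loc := by
  apply IsLocalization.ringHom_ext S (S := Loc)
  apply Ideal.Quotient.ringHom_ext
  apply MvPolynomial.ringHom_ext
  · intro r
    have hz := RingHom.ext_zmod
      ((((G.comp F).comp (algebraMap R Loc)).comp (Ideal.Quotient.mk relIdeal)).comp
        MvPolynomial.C)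
      ((((RingHom.id Loc).comp (algebraMap R Loc)).comp (Ideal.Quotient.mk relIdeal)).comp
        MvPolynomial.C)
    exact RingHom.congr_fun hz r
  · intro v
    match v with
    | none =>
      show G (F (algebraMap R Loc ρbar)) = algebraMap R Loc ρbar
      rw [F_am, fbar_ρ, G_C, g1_T1, ρu_coe]
    | some i =>
      show G (F (algebraMap R Loc (rbar i))) = algebraMap R Loc (rbar i)
      rw [F_am, GF_r]

lemma F_ρu : F (ρu : Loc) = LaurentPolynomial.C (T 1) := by
  rw [ρu_coe, F_am, fbar_ρ]

lemma F_ru : F (ru : Loc) = T 1 := by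
  rw [ru_coe, F_am, fbar_r]
  norm_num

lemma F_comp_g1 (x : L0) : F (g1 x) = LaurentPolynomial.C x := by
  haveI := LaurentPolynomial.isLocalization (R := ZMod 2)
  have h : F.comp g1 = (LaurentPolynomial.C : L0 →+* L) := by
    apply IsLocalization.ringHom_ext (Submonoid.powers (Polynomial.X : Polynomial (ZMod 2)))
    refine Polynomial.ringHom_ext ?_ ?_
    · intro a
      have hz := RingHom.ext_zmod
        (((F.comp g1).comp (algebraMap (Polynomial (ZMod 2)) L0)).comp Polynomial.C)
        (((LaurentPolynomial.C : L0 →+* L).comp (algebraMap (Polynomial (ZMod 2)) L0)).comp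
          Polynomial.C)
      exact RingHom.congr_fun hz a
    · show F (g1 (algebraMap (Polynomial (ZMod 2)) L0 Polynomial.X)) =
        LaurentPolynomial.C (algebraMap (Polynomial (ZMod 2)) L0 Polynomial.X)
      rw [algebraMap_eq_toLaurent, Polynomial.toLaurent_X, g1_T1, F_ρu]
  exact RingHom.congr_fun h x

lemma F_comp_G : F.comp G = RingHom.id L := by
  haveI := LaurentPolynomial.isLocalization (R := L0)
  apply IsLocalization.ringHom_ext (Submonoid.powers (Polynomial.X : Polynomial L0))
  refine Polynomial.ringHom_ext ?_ ?_
  · intro a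
    show F (G (algebraMap (Polynomial L0) L (Polynomial.C a))) =
      algebraMap (Polynomial L0) L (Polynomial.C a)
    rw [algebraMap_eq_toLaurent, Polynomial.toLaurent_C, G_C, F_comp_g1]
  · show F (G (algebraMap (Polynomial L0) L Polynomial.X)) =
      algebraMap (Polynomial L0) L Polynomial.X
    rw [algebraMap_eq_toLaurent, Polynomial.toLaurent_X, G_T1, F_ru]

end Stmt2Aux

set_option synthInstance.maxHeartbeats 1000000 in
/-- The localization of `R` at the multiplicative submonoid generated by `ρ̄` and `r̄₀` is
isomorphic, as a commutative ring, to the Laurent polynomial ring in two variables over `𝔽₂`,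
i.e. `(𝔽₂[t, t⁻¹])[u, u⁻¹]`. -/
theorem stmt2 :
    Nonempty
      (Localization (Submonoid.closure {ρbar, rbar 0}) ≃+*
        LaurentPolynomial (LaurentPolynomial (ZMod 2))) := by
  exact ⟨RingEquiv.ofRingHom Stmt2Aux.F Stmt2Aux.G Stmt2Aux.F_comp_G Stmt2Aux.G_comp_F⟩
end
end

section
/- The ring R = 𝔽₂[ρ, r₀, r₁, r₂, …]/(rᵢ² − ρ·rᵢ₊₁ : i ∈ ℕ) is a free module over the polynomial ring 𝔽₂[ρ] (acting through the 𝔽₂-algebra map 𝔽₂[ρ] → R sending ρ to ρ̄), with basis given by the images of the squarefree monomials ∏_{i∈T} rᵢ, where T ranges over all finite subsets of ℕ. -/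
open MvPolynomial

noncomputable section

set_option synthInstance.maxHeartbeats 1000000
set_option maxHeartbeats 1000000
set_option linter.unnecessarySimpa false

/-- The `𝔽₂[ρ]`-module structure on `R` through the `𝔽₂`-algebra map
`𝔽₂[ρ] → R` sending `ρ` to `ρ̄`. -/
instance : Module (Polynomial (ZMod 2)) R :=
  ((Polynomial.aeval ρbar : Polynomial (ZMod 2) →ₐ[ZMod 2] R) :
    Polynomial (ZMod 2) →+* R).toModule

namespace Stmt5Aux

abbrev A : Type := Polynomial (ZMod 2)
abbrev S : Type := Polynomial A

/-- The evaluation `ρ ↦ C X`, `rᵢ ↦ C X * X ^ 2^i`. -/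
def f : Option ℕ → S := fun o => o.rec (Polynomial.C Polynomial.X)
  (fun i => Polynomial.C Polynomial.X * Polynomial.X ^ (2 ^ i))

lemma hrel : ∀ p ∈ relIdeal, (aeval f) p = 0 := by
  intro p hp
  refine (Ideal.span_le.mpr ?_ : relIdeal ≤ RingHom.ker (aeval f : P →ₐ[ZMod 2] S)) hp
  rintro q ⟨i, rfl⟩
  simp only [SetLike.mem_coe, RingHom.mem_ker, map_sub, map_mul, map_pow, aeval_X]
  show (Polynomial.C Polynomial.X * Polynomial.X ^ (2 ^ i)) ^ 2 -
    Polynomial.C Polynomial.X * (Polynomial.C Polynomial.X * Polynomial.X ^ (2 ^ (i+1))) = 0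
  rw [pow_succ]
  ring

def ψbar : R →ₐ[ZMod 2] S := Ideal.Quotient.liftₐ relIdeal (aeval f) hrel

lemma ψbar_ρbar : ψbar ρbar = Polynomial.C Polynomial.X := by
  show aeval f (X none : P) = _
  simp [f]

lemma ψbar_rbar (i : ℕ) : ψbar (rbar i) = Polynomial.C Polynomial.X * Polynomial.X ^ (2 ^ i) := by
  show aeval f (X (some i) : P) = _
  simp [f]

lemma aevalCX (a : A) :
    Polynomial.aeval (Polynomial.C Polynomial.X : S) a = Polynomial.C a := by
  have h : (Polynomial.aeval (Polynomial.C Polynomial.X : S) : A →ₐ[ZMod 2] S) =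
      Polynomial.CAlgHom := by
    apply Polynomial.algHom_ext
    simp [Polynomial.CAlgHom]
  exact congrFun (congrArg DFunLike.coe h) a

lemma smul_def (a : A) (x : R) : a • x = Polynomial.aeval ρbar a * x := rfl

lemma ψbar_smul (a : A) (x : R) : ψbar (a • x) = Polynomial.C a * ψbar x := by
  rw [smul_def, map_mul, ← Polynomial.aeval_algHom_apply, ψbar_ρbar, aevalCX]

lemma ψbar_prod (T : Finset ℕ) :
    ψbar (∏ i ∈ T, rbar i) =
      Polynomial.C (Polynomial.X ^ T.card) * Polynomial.X ^ (∑ i ∈ T, 2 ^ i) := by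
  rw [map_prod]
  simp only [ψbar_rbar]
  rw [Finset.prod_mul_distrib, Finset.prod_const, Finset.prod_pow_eq_pow_sum, map_pow]

lemma rel (i : ℕ) : rbar i ^ 2 = ρbar * rbar (i + 1) := by
  have : Ideal.Quotient.mk relIdeal ((X (some i) : P) ^ 2 - X none * X (some (i+1))) = 0 :=
    Ideal.Quotient.eq_zero_iff_mem.mpr (Ideal.subset_span ⟨i, rfl⟩)
  rw [map_sub, sub_eq_zero] at this
  simpa [rbar, ρbar] using this

def sp : Submodule A R := Submodule.span A (Set.range fun T : Finset ℕ => ∏ i ∈ T, rbar i)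

lemma mul_ρbar_mem {x : R} (hx : x ∈ sp) : ρbar * x ∈ sp := by
  have h : ρbar * x = (Polynomial.X : A) • x := by
    rw [smul_def, Polynomial.aeval_X]
  rw [h]; exact sp.smul_mem _ hx

lemma key : ∀ (m n : ℕ) (T : Finset ℕ), (T.filter (fun i => n ≤ i)).card ≤ m →
    rbar n * ∏ i ∈ T, rbar i ∈ sp := by
  intro m
  induction m with
  | zero =>
    intro n T hT
    have hnT : n ∉ T := by
      intro hn
      have : n ∈ T.filter (fun i => n ≤ i) := Finset.mem_filter.mpr ⟨hn, le_refl n⟩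
      simp [Finset.card_eq_zero.mp (Nat.le_zero.mp hT)] at this
    rw [← Finset.prod_insert hnT]
    exact Submodule.subset_span ⟨insert n T, rfl⟩
  | succ m ih =>
    intro n T hT
    by_cases hnT : n ∈ T
    · rw [← Finset.mul_prod_erase T _ hnT, ← mul_assoc, ← sq, rel, mul_assoc]
      apply mul_ρbar_mem
      apply ih (n + 1)
      have hsub : (T.erase n).filter (fun i => n + 1 ≤ i) ⊆
          (T.filter (fun i => n ≤ i)).erase n := by
        intro i hi
        simp only [Finset.mem_filter, Finset.mem_erase] at hi ⊢
        refine ⟨hi.1.1, hi.1.2, by omega⟩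
      calc ((T.erase n).filter (fun i => n + 1 ≤ i)).card
          ≤ ((T.filter (fun i => n ≤ i)).erase n).card := Finset.card_le_card hsub
        _ = (T.filter (fun i => n ≤ i)).card - 1 :=
            Finset.card_erase_of_mem (Finset.mem_filter.mpr ⟨hnT, le_refl n⟩)
        _ ≤ m := by omega
    · rw [← Finset.prod_insert hnT]
      exact Submodule.subset_span ⟨insert n T, rfl⟩

lemma mul_rbar_mem (n : ℕ) {x : R} (hx : x ∈ sp) : rbar n * x ∈ sp := by
  induction hx using Submodule.span_induction with
  | mem x h =>
    obtain ⟨T, rfl⟩ := h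
    exact key (T.filter (fun i => n ≤ i)).card n T le_rfl
  | zero => simpa using sp.zero_mem
  | add x y hx hy hx' hy' => rw [mul_add]; exact sp.add_mem hx' hy'
  | smul a x hx hx' =>
    have h : rbar n * (a • x) = a • (rbar n * x) := by
      rw [smul_def, smul_def]; ring
    rw [h]; exact sp.smul_mem a hx'

lemma spanning (x : R) : x ∈ sp := by
  obtain ⟨p, rfl⟩ := Ideal.Quotient.mk_surjective (I := relIdeal) x
  induction p using MvPolynomial.induction_on with
  | C a =>
    fin_cases a
    · show Ideal.Quotient.mk relIdeal (MvPolynomial.C 0 : P) ∈ sp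
      simpa using sp.zero_mem
    · have h1 : Ideal.Quotient.mk relIdeal (MvPolynomial.C 1 : P) = ∏ i ∈ (∅ : Finset ℕ), rbar i := by
        simp
      show Ideal.Quotient.mk relIdeal (MvPolynomial.C 1 : P) ∈ sp
      rw [h1]
      exact Submodule.subset_span ⟨∅, rfl⟩
  | add p q hp hq => rw [map_add]; exact sp.add_mem hp hq
  | mul_X p o hp =>
    rw [map_mul]
    cases o with
    | none =>
      rw [mul_comm]
      exact mul_ρbar_mem hp
    | some n =>
      rw [mul_comm]
      exact mul_rbar_mem n hp

lemma indep : LinearIndependent A (fun T : Finset ℕ => ∏ i ∈ T, rbar i) := by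
  rw [linearIndependent_iff]
  intro l hl
  have h0 : (0 : S) = ∑ T ∈ l.support,
      Polynomial.C (l T * Polynomial.X ^ T.card) * Polynomial.X ^ (∑ i ∈ T, 2 ^ i) := by
    have := congrArg ψbar hl
    rw [map_zero, Finsupp.linearCombination_apply, Finsupp.sum, map_sum] at this
    rw [← this]
    refine Finset.sum_congr rfl fun T _ => ?_
    rw [ψbar_smul, ψbar_prod, map_mul, ← mul_assoc]
  refine Finsupp.ext fun T₀ => ?_
  by_cases hT : T₀ ∈ l.support
  · have hc := congrArg (fun q => Polynomial.coeff q (∑ i ∈ T₀, 2 ^ i)) h0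
    simp only [Polynomial.coeff_zero, Polynomial.finset_sum_coeff, Polynomial.coeff_C_mul,
      Polynomial.coeff_X_pow] at hc
    rw [Finset.sum_eq_single_of_mem T₀ hT (fun T _ hne => by
      rw [if_neg (fun h => hne ((Finset.geomSum_injective le_rfl) h.symm)), mul_zero])] at hc
    rw [if_pos rfl, mul_one] at hc
    have := mul_eq_zero.mp hc.symm
    rcases this with h | h
    · exact h
    · exact absurd h (pow_ne_zero _ Polynomial.X_ne_zero)
  · exact Finsupp.notMem_support_iff.mp hT

end Stmt5Aux

/-- `R` is a free `𝔽₂[ρ]`-module with basis the squarefree monomials `∏_{i∈T} r̄ᵢ`,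
`T` ranging over finite subsets of `ℕ`. -/
theorem stmt5 :
    ∃ b : Module.Basis (Finset ℕ) (Polynomial (ZMod 2)) R,
      ∀ T : Finset ℕ, b T = ∏ i ∈ T, rbar i := by
  have hs : ⊤ ≤ Submodule.span Stmt5Aux.A
      (Set.range fun T : Finset ℕ => ∏ i ∈ T, rbar i) :=
    fun x _ => Stmt5Aux.spanning x
  exact ⟨Module.Basis.mk Stmt5Aux.indep hs, fun T => Module.Basis.mk_apply Stmt5Aux.indep hs T⟩
end
end

section
/- Let m ≥ 2 be a natural number, set d := 2^{m−1} − 1 and dᵢ := 2^i − 1 for each i. For a finite subset T ⊆ {0, 1, …, m−2}, define v(T) := |T|·d − ∑_{i∈T} dᵢ ∈ ℤ. Then 0 ≤ v(T) ≤ d − 1 holds if and only if T = ∅ or T = {i} for some i with 1 ≤ i ≤ m−2; moreover v(∅) = 0, v({i}) = d − dᵢ for 1 ≤ i ≤ m−2, and the values 0, d − d₁, …, d − d_{m−2} are pairwise distinct. -/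
noncomputable section

/-- `d := 2^{m−1} − 1`. -/
def dd (m : ℕ) : ℤ := 2 ^ (m - 1) - 1

/-- `dᵢ := 2^i − 1`. -/
def ddi (i : ℕ) : ℤ := 2 ^ i - 1

/-- `v(T) := |T|·d − ∑_{i∈T} dᵢ`. -/
def v (m : ℕ) (T : Finset ℕ) : ℤ := (T.card : ℤ) * dd m - ∑ i ∈ T, ddi i

lemma v_eq (m : ℕ) (T : Finset ℕ) :
    v m T = (T.card : ℤ) * 2 ^ (m - 1) - ∑ i ∈ T, (2:ℤ) ^ i := by
  unfold v dd ddi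
  rw [Finset.sum_sub_distrib, Finset.sum_const, nsmul_eq_mul, mul_one]
  ring

lemma sum_bound (m : ℕ) (T : Finset ℕ) (hT : T ⊆ Finset.range (m - 1)) :
    ∑ i ∈ T, (2:ℤ) ^ i ≤ 2 ^ (m - 1) - 1 := by
  have h1 : ∑ i ∈ T, (2:ℤ) ^ i ≤ ∑ i ∈ Finset.range (m - 1), (2:ℤ) ^ i := by
    apply Finset.sum_le_sum_of_subset_of_nonneg hT
    intro i _ _; positivity
  have h2 : (∑ i ∈ Finset.range (m - 1), (2:ℤ) ^ i) * (2 - 1) = 2 ^ (m - 1) - 1 :=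
    geom_sum_mul 2 (m - 1)
  simpa using h1.trans_eq (show ∑ i ∈ Finset.range (m - 1), (2:ℤ) ^ i = 2 ^ (m - 1) - 1 by linarith)

lemma pow_mono (a b : ℕ) (h : a ≤ b) : (2:ℤ) ^ a ≤ 2 ^ b :=
  pow_le_pow_right₀ (by norm_num) h

lemma v_singleton (m i : ℕ) : v m {i} = 2 ^ (m - 1) - 2 ^ i := by
  simp [v_eq]

/-- For `m ≥ 2` and `d = 2^{m−1} − 1`: a finite subset `T ⊆ {0, …, m−2}` satisfies
`0 ≤ v(T) ≤ d − 1` iff `T = ∅` or `T = {i}` with `1 ≤ i ≤ m−2`; moreover `v(∅) = 0`,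
`v({i}) = d − dᵢ` for `1 ≤ i ≤ m−2`, and the values `0, d − d₁, …, d − d_{m−2}` are
pairwise distinct. -/
theorem stmt7 (m : ℕ) (hm : 2 ≤ m) :
    (∀ T : Finset ℕ, T ⊆ Finset.range (m - 1) →
      ((0 ≤ v m T ∧ v m T ≤ dd m - 1) ↔
        (T = ∅ ∨ ∃ i : ℕ, 1 ≤ i ∧ i ≤ m - 2 ∧ T = {i}))) ∧
    v m ∅ = 0 ∧
    (∀ i : ℕ, 1 ≤ i → i ≤ m - 2 → v m {i} = dd m - ddi i) ∧
    (∀ i : ℕ, 1 ≤ i → i ≤ m - 2 → dd m - ddi i ≠ 0) ∧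
    (∀ i j : ℕ, 1 ≤ i → i ≤ m - 2 → 1 ≤ j → j ≤ m - 2 →
      dd m - ddi i = dd m - ddi j → i = j) := by
  have h2m : (2:ℤ) ≤ 2 ^ (m - 1) := by
    calc (2:ℤ) = 2 ^ 1 := (pow_one 2).symm
    _ ≤ 2 ^ (m - 1) := pow_mono 1 (m - 1) (by omega)
  refine ⟨?_, ?_, ?_, ?_, ?_⟩
  · intro T hT
    constructor
    · rintro ⟨h0, h1⟩
      have hsum := sum_bound m T hT
      rw [dd] at h1
      have hcard : T.card ≤ 1 := by
        by_contra h
        push_neg at h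
        have : (2:ℤ) ≤ (T.card : ℤ) := by exact_mod_cast h
        have hv := v_eq m T
        nlinarith [h2m]
      interval_cases hc : T.card
      · left; exact Finset.card_eq_zero.mp hc
      · right
        obtain ⟨i, hi⟩ := Finset.card_eq_one.mp hc
        have hmem : i ∈ Finset.range (m - 1) := hT (hi ▸ Finset.mem_singleton_self i)
        have hilt : i < m - 1 := Finset.mem_range.mp hmem
        have hvi : v m T = 2 ^ (m - 1) - 2 ^ i := hi ▸ v_singleton m i
        refine ⟨i, ?_, by omega, hi⟩
        by_contra h
        push_neg at h
        interval_cases i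
        simp at hvi
        omega
    · rintro (rfl | ⟨i, hi1, hi2, rfl⟩)
      · constructor
        · simp [v]
        · rw [dd]; simp [v]; linarith
      · rw [v_singleton, dd]
        have hle : (2:ℤ) ^ i ≤ 2 ^ (m - 1) := pow_mono i (m - 1) (by omega)
        have hge : (2:ℤ) ≤ 2 ^ i := by
          calc (2:ℤ) = 2 ^ 1 := (pow_one 2).symm
          _ ≤ 2 ^ i := pow_mono 1 i hi1
        constructor <;> linarith
  · simp [v]
  · intro i _ _
    rw [v_singleton, dd, ddi]; ring
  · intro i hi1 hi2
    rw [dd, ddi]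
    have hlt : (2:ℤ) ^ i < 2 ^ (m - 1) :=
      pow_lt_pow_right₀ (by norm_num) (by omega)
    intro h; linarith
  · intro i j _ _ _ _ h
    rw [dd, ddi, ddi] at h
    have : (2:ℤ) ^ i = 2 ^ j := by linarith
    have h' : (2:ℕ) ^ i = 2 ^ j := by exact_mod_cast this
    exact Nat.pow_right_injective (by norm_num) h'
end
end
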